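/- Let λ be a partition and x, y ∈ P_λ. Then y covers x in the rook poset P_λ if and only if x is obtained from y by performing a single switch move or a single push move. -/

import Mathlib

namespace RookPoset

/-- A partition with `n` parts: `part i` is the (1-based) part `λ_{i+1}`.
The parts are weakly increasing and contain the staircase (`λ_i ≥ i`, 1-based),
which in particular makes them positive. -/
structure Partition (n : ℕ) where
  part : Fin n → ℕ
  mono : Monotone part
  staircase : ∀ i : Fin n, (i : ℕ) + 1 ≤ part i

/-- The largest part; equals `λ_n` when `n > 0`. -/
def Partition.maxPart {n : ℕ} (lam : Partition n) : ℕ :=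
  Finset.univ.sup lam.part

/-- The part `λ_k` in 1-based indexing, with the convention `λ_m = n + 1` for `m > n`. -/
def Partition.partAt {n : ℕ} (lam : Partition n) (k : ℕ) : ℕ :=
  if h : 1 ≤ k ∧ k ≤ n then lam.part ⟨k - 1, by omega⟩ else n + 1

/-- The GJW sequence `(λ_1 - 1, λ_2 - 2, …, λ_n - n)` of a partition. -/
def Partition.gjw {n : ℕ} (lam : Partition n) : List ℕ :=
  (List.finRange n).map fun i => lam.part i - ((i : ℕ) + 1)

/-- A maximal rook placement on the Ferrers board of `lam`: `col i` is the (1-based)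
column of the rook in the (1-based) row `i + 1` (rows indexed bottom-up). -/
structure Placement {n : ℕ} (lam : Partition n) where
  col : Fin n → ℕ
  inj : Function.Injective col
  pos : ∀ i, 1 ≤ col i
  le_part : ∀ i, col i ≤ lam.part i

/-- The increasingly sorted list of the values `x i` over indices `i` with `(i : ℕ) < j`,
i.e. the sorted initial segment `{x_1, …, x_j}` (1-based). -/
def initSeg {n : ℕ} (x : Fin n → ℕ) (j : ℕ) : List ℕ :=
  ((Finset.univ.filter fun i : Fin n => (i : ℕ) < j).image x).sort (· ≤ ·)

/-- The rook poset order: `x ≤ y` iff each sorted initial segment of `x` is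
componentwise at most the corresponding sorted initial segment of `y`. -/
def rle {n : ℕ} {lam : Partition n} (x y : Placement lam) : Prop :=
  ∀ j : ℕ, List.Forall₂ (· ≤ ·) (initSeg x.col j) (initSeg y.col j)

/-- `y` covers `x` in the rook poset. -/
def rcovers {n : ℕ} {lam : Partition n} (x y : Placement lam) : Prop :=
  rle x y ∧ x ≠ y ∧ ∀ z : Placement lam, rle x z → rle z y → z = x ∨ z = y

/-- `y` covers `x` in the subposet induced on `S`. -/
def rcoversIn {n : ℕ} {lam : Partition n} (S : Set (Placement lam)) (x y : Placement lam) :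
    Prop :=
  x ∈ S ∧ y ∈ S ∧ rle x y ∧ x ≠ y ∧ ∀ z ∈ S, rle x z → rle z y → z = x ∨ z = y

/-- `t` is the greedy placement `1̂`: for each row in turn (bottom-up), the rook is placed
in the largest column `≤ λ_i` not used by a lower row. -/
def IsGreedy {n : ℕ} {lam : Partition n} (t : Placement lam) : Prop :=
  ∀ i : Fin n, ∀ m : ℕ, 1 ≤ m → m ≤ lam.part i →
    (∀ k : Fin n, k < i → t.col k ≠ m) → m ≤ t.col i

/-- `x` is obtained from `y` by the switch move on the rooks in rows `i < k`:
the rectangle spanned by the rooks at `(i, y.col i)` and `(k, y.col k)` contains no other rook,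
and the two rooks exchange columns. -/
def SwitchMove {n : ℕ} {lam : Partition n} (y x : Placement lam) (i k : Fin n) : Prop :=
  i < k ∧ y.col k < y.col i ∧
  (∀ r : Fin n, i ≤ r → r ≤ k → y.col k ≤ y.col r → y.col r ≤ y.col i → r = i ∨ r = k) ∧
  x.col i = y.col k ∧ x.col k = y.col i ∧
  ∀ r : Fin n, r ≠ i → r ≠ k → x.col r = y.col r

/-- `x` is obtained from `y` by a push move on the rook in row `i`: the rook moves to an
empty column `c` to its left such that every column strictly between `c` and its old column
contains a rook in a row below row `i`. -/
def PushMove {n : ℕ} {lam : Partition n} (y x : Placement lam) (i : Fin n) : Prop :=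
  ∃ c : ℕ, 1 ≤ c ∧ c < y.col i ∧ (∀ r : Fin n, y.col r ≠ c) ∧
    (∀ d : ℕ, c < d → d < y.col i → ∃ r : Fin n, r < i ∧ y.col r = d) ∧
    x.col i = c ∧ ∀ r : Fin n, r ≠ i → x.col r = y.col r

/-- `x` is obtained from `y` by a single switch or push move on the rook in row `i`. -/
def MoveOnRow {n : ℕ} {lam : Partition n} (y x : Placement lam) (i : Fin n) : Prop :=
  (∃ k : Fin n, SwitchMove y x i k) ∨ PushMove y x i

/-- Two coatoms `c, c'` of the rook poset (with top element `t`) are entangled: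
there are two distinct elements each of which is covered by both `c` and `c'`
and lies below no other coatom. -/
def Entangled {n : ℕ} {lam : Partition n} (t c c' : Placement lam) : Prop :=
  ∃ z₁ z₂ : Placement lam, z₁ ≠ z₂ ∧
    (rcovers z₁ c ∧ rcovers z₁ c' ∧
      ∀ d : Placement lam, rcovers d t → d ≠ c → d ≠ c' → ¬ rle z₁ d) ∧
    (rcovers z₂ c ∧ rcovers z₂ c' ∧
      ∀ d : Placement lam, rcovers d t → d ≠ c → d ≠ c' → ¬ rle z₂ d)

/-- `X_I`: the set of elements of the rook poset lying below no coatom outside `I`. -/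
def Xset {n : ℕ} {lam : Partition n} (t : Placement lam) (I : Set (Placement lam)) :
    Set (Placement lam) :=
  {z : Placement lam | ∀ c' : Placement lam, rcovers c' t → c' ∉ I → ¬ rle z c'}

/-- The completed permutation `σ_x` of `{1, …, λ_n}` (as a function on 1-based positions):
position `i ≤ n` holds `x_i`, and the remaining positions hold the unused values in
increasing order (i.e. each subsequent position receives the smallest value not yet used). -/
def Placement.sigma {n : ℕ} {lam : Partition n} (x : Placement lam) : ℕ → ℕ := fun a =>
  if h : 1 ≤ a ∧ a ≤ n then x.col ⟨a - 1, by omega⟩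
  else ((Finset.Icc 1 lam.maxPart \ Finset.univ.image x.col).sort (· ≤ ·)).getD (a - n - 1) 0

/-- The rank `r(x)`: the number of inversions of the completed permutation `σ_x`. -/
def Placement.rank {n : ℕ} {lam : Partition n} (x : Placement lam) : ℕ :=
  ((Finset.Icc 1 lam.maxPart ×ˢ Finset.Icc 1 lam.maxPart).filter
    fun p => p.1 < p.2 ∧ x.sigma p.2 < x.sigma p.1).card

/-- Break a list after every entry equal to `1`. -/
def breakAfterOnes : List ℕ → List (List ℕ)
  | [] => []
  | a :: rest =>
    if a = 1 then [a] :: breakAfterOnes rest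
    else
      match breakAfterOnes rest with
      | [] => [[a]]
      | b :: bs => (a :: b) :: bs

/-- The multiset of blocks of a partition: break the GJW sequence after every entry
equal to `1` and delete all entries equal to `0` (discarding empty blocks). -/
def Partition.blocks {n : ℕ} (lam : Partition n) : Multiset (List ℕ) :=
  (((breakAfterOnes lam.gjw).map fun b => b.filter (· ≠ 0)).filter
    (· ≠ ([] : List ℕ)) : List (List ℕ))

/-- The conjugate of a block `b = (g_1, …, g_k)` ending in `1`: it is the GJW sequence of the
conjugate partition `ν'` of the partition `ν` with `ν_i = g_i + i`, where
`ν'_i = k + 2 - min {m | ν_m ≥ k + 2 - i}` with the convention `ν_{k+1} = k + 1`. -/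
noncomputable def conjBlock (b : List ℕ) : List ℕ :=
  let k := b.length
  let nu : ℕ → ℕ := fun m => if m ≤ k then b.getD (m - 1) 0 + m else k + 1
  (List.range k).map fun i0 =>
    let i := i0 + 1
    (k + 2 - sInf {m : ℕ | 1 ≤ m ∧ k + 2 - i ≤ nu m}) - i

/-- A block ends in `1`. -/
def endsInOne (b : List ℕ) : Prop := b.getLast? = some 1

/-- Two blocks are equivalent when they are equal, or one ends in `1` and the other is its
conjugate block. -/
def BlockEquiv (b b' : List ℕ) : Prop :=
  b = b' ∨ (endsInOne b ∧ b' = conjBlock b) ∨ (endsInOne b' ∧ b = conjBlock b')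

/-- Two partitions have matching block data: their multisets of blocks become equal after
replacing some blocks ending in `1` by their conjugate blocks. -/
def MatchingBlocks {n m : ℕ} (lam : Partition n) (mu : Partition m) : Prop :=
  Multiset.Rel BlockEquiv lam.blocks mu.blocks

/-- The rook posets of `lam` and `mu` are isomorphic as partially ordered sets. -/
def RookIso {n m : ℕ} (lam : Partition n) (mu : Partition m) : Prop :=
  ∃ e : Placement lam ≃ Placement mu, ∀ a b : Placement lam, rle a b ↔ rle (e a) (e b)

/-- A function `τ`, viewed as a permutation of `{1, …, N}`, is `312`-avoiding. -/
def Avoids312 (N : ℕ) (τ : ℕ → ℕ) : Prop :=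
  ∀ a b c : ℕ, 1 ≤ a → a < b → b < c → c ≤ N → ¬ (τ b < τ c ∧ τ c < τ a)

/-- A permutation of `Fin N` is `312`-avoiding. -/
def Avoids312P {N : ℕ} (τ : Equiv.Perm (Fin N)) : Prop :=
  ∀ a b c : Fin N, a < b → b < c → ¬ (τ b < τ c ∧ τ c < τ a)

/-- The Bruhat order on permutations, characterized by componentwise dominance of the
increasingly sorted initial segments. -/
def bruhatLE {N : ℕ} (σ τ : Equiv.Perm (Fin N)) : Prop :=
  ∀ j : ℕ, List.Forall₂ (· ≤ ·)
    (initSeg (fun a : Fin N => (σ a : ℕ)) j) (initSeg (fun a : Fin N => (τ a : ℕ)) j)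


section Aux

open Finset

variable {n : ℕ} {lam : Partition n}

/-- prefix count: number of rows `r < j` with value `≥ v`. -/
def cnt (f : Fin n → ℕ) (j v : ℕ) : ℕ :=
  (Finset.univ.filter fun r : Fin n => (r : ℕ) < j ∧ v ≤ f r).card

lemma countP_le_of_forall2 {A B : List ℕ} (h : List.Forall₂ (· ≤ ·) A B) (v : ℕ) :
    A.countP (fun a => decide (v ≤ a)) ≤ B.countP (fun a => decide (v ≤ a)) := by
  induction h with
  | nil => simp
  | @cons a b l1 l2 hab htl ih =>
    rw [List.countP_cons, List.countP_cons]
    by_cases h1 : v ≤ a <;> by_cases h2 : v ≤ b <;> simp [h1, h2] <;> omega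

lemma forall2_of_countP {A B : List ℕ} (hA : A.Pairwise (· ≤ ·)) (hB : B.Pairwise (· ≤ ·))
    (hlen : A.length = B.length)
    (h : ∀ v, A.countP (fun a => decide (v ≤ a)) ≤ B.countP (fun a => decide (v ≤ a))) :
    List.Forall₂ (· ≤ ·) A B := by
  rw [List.forall₂_iff_get]
  refine ⟨hlen, fun t h1 h2 => ?_⟩
  by_contra hc
  push_neg at hc
  set a := A.get ⟨t, h1⟩ with ha
  have hAcount : A.length - t ≤ A.countP (fun x => decide (a ≤ x)) := by
    have hsplit : A.countP (fun x => decide (a ≤ x)) =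
        (A.take t).countP (fun x => decide (a ≤ x)) +
        (A.drop t).countP (fun x => decide (a ≤ x)) := by
      conv_lhs => rw [← List.take_append_drop t A]
      rw [List.countP_append]
    have hall : (A.drop t).countP (fun x => decide (a ≤ x)) = (A.drop t).length := by
      rw [List.countP_eq_length]
      intro x hx
      obtain ⟨s, hs⟩ := List.mem_iff_get.1 hx
      have hdl : (A.drop t).length = A.length - t := by simp
      have hget : (A.drop t).get s = A.get ⟨t + s, by
          have := s.isLt; omega⟩ := by
        simp [List.getElem_drop]
      have h5 : a ≤ (A.drop t).get s := by
        rw [hget]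
        exact hA.rel_get_of_le (by simp)
      rw [hs] at h5
      simpa using h5
    have : (A.drop t).length = A.length - t := by simp
    omega
  have hBcount : B.countP (fun x => decide (a ≤ x)) ≤ B.length - (t + 1) := by
    have hsplit : B.countP (fun x => decide (a ≤ x)) =
        (B.take (t+1)).countP (fun x => decide (a ≤ x)) +
        (B.drop (t+1)).countP (fun x => decide (a ≤ x)) := by
      conv_lhs => rw [← List.take_append_drop (t+1) B]
      rw [List.countP_append]
    have hz : (B.take (t+1)).countP (fun x => decide (a ≤ x)) = 0 := by
      rw [List.countP_eq_zero]
      intro x hx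
      obtain ⟨s, hs⟩ := List.mem_iff_get.1 hx
      have hdl : (B.take (t+1)).length = min (t+1) B.length := by simp
      have hlt : (s : ℕ) < t + 1 := by
        have := s.isLt; omega
      have hslen : (s : ℕ) < B.length := by omega
      have hget : (B.take (t+1)).get s = B.get ⟨s, hslen⟩ := by
        simp [List.getElem_take]
      have h5 : B.get ⟨s, hslen⟩ ≤ B.get ⟨t, h2⟩ := hB.rel_get_of_le (by
        simp only [Fin.mk_le_mk]; omega)
      have h6 : x < a := by rw [← hs, hget]; omega
      simp only [decide_eq_true_eq]; omega
    have : (B.drop (t+1)).countP (fun x => decide (a ≤ x)) ≤ B.length - (t+1) := by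
      have := List.countP_le_length (l := B.drop (t+1)) (p := fun x => decide (a ≤ x))
      simpa using this
    omega
  have := h a
  omega

end Aux
section Aux2
open Finset
variable {n : ℕ} {lam : Partition n}

lemma sort_countP (s : Finset ℕ) (p : ℕ → Prop) [DecidablePred p] :
    (s.sort (· ≤ ·)).countP (fun a => decide (p a)) = (s.filter p).card := by
  rw [((s.sort_perm_toList (· ≤ ·))).countP_eq]
  rw [show (s.filter p).card = Multiset.countP p s.val by
    simp [Finset.card, Finset.filter_val, Multiset.countP_eq_card_filter]]
  rw [show s.val = ((s.toList : List ℕ) : Multiset ℕ) from s.coe_toList.symm, Multiset.coe_countP]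

lemma initSeg_countP {f : Fin n → ℕ} (hf : Function.Injective f) (j v : ℕ) :
    (initSeg f j).countP (fun a => decide (v ≤ a)) = cnt f j v := by
  unfold initSeg cnt
  rw [sort_countP]
  rw [Finset.filter_image]
  rw [Finset.card_image_of_injective _ hf, Finset.filter_filter]

lemma initSeg_length {f : Fin n → ℕ} (hf : Function.Injective f) (j : ℕ) :
    (initSeg f j).length = (Finset.univ.filter fun r : Fin n => (r : ℕ) < j).card := by
  unfold initSeg
  rw [Finset.length_sort, Finset.card_image_of_injective _ hf]

lemma rle_iff_cnt {x y : Placement lam} :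
    rle x y ↔ ∀ j v, cnt x.col j v ≤ cnt y.col j v := by
  constructor
  · intro h j v
    rw [← initSeg_countP x.inj, ← initSeg_countP y.inj]
    exact countP_le_of_forall2 (h j) v
  · intro h j
    exact forall2_of_countP (Finset.pairwise_sort _ _) (Finset.pairwise_sort _ _)
      (by rw [initSeg_length x.inj, initSeg_length y.inj])
      (fun v => by rw [initSeg_countP x.inj, initSeg_countP y.inj]; exact h j v)

end Aux2
section Aux3
open Finset
variable {n : ℕ}

/-- count over the rows strictly between `i` and `j`. -/
def cntmid (f : Fin n → ℕ) (i : Fin n) (j v : ℕ) : ℕ :=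
  (Finset.univ.filter fun r : Fin n => (i : ℕ) < (r : ℕ) ∧ (r : ℕ) < j ∧ v ≤ f r).card

lemma cnt_congr {f g : Fin n → ℕ} {j : ℕ} (v : ℕ)
    (h : ∀ r : Fin n, (r : ℕ) < j → f r = g r) : cnt f j v = cnt g j v := by
  unfold cnt
  congr 1
  apply Finset.filter_congr
  intro r _
  by_cases hr : (r : ℕ) < j
  · simp [hr, h r hr]
  · simp [hr]

lemma cnt_split (f : Fin n → ℕ) (i : Fin n) {j : ℕ} (hij : (i : ℕ) < j) (v : ℕ) :
    cnt f j v = cnt f (i : ℕ) v + (if v ≤ f i then 1 else 0) + cntmid f i j v := by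
  unfold cnt cntmid
  rw [Finset.card_filter, Finset.card_filter, Finset.card_filter]
  have key : ∀ r : Fin n,
      (if (r : ℕ) < j ∧ v ≤ f r then 1 else 0) =
      ((if (r : ℕ) < (i : ℕ) ∧ v ≤ f r then 1 else 0)
        + (if r = i ∧ v ≤ f r then 1 else 0))
        + (if (i : ℕ) < (r : ℕ) ∧ (r : ℕ) < j ∧ v ≤ f r then 1 else 0) := by
    intro r
    have ite0 : ∀ (C : Prop) [Decidable C], ¬ C → (if C then (1:ℕ) else 0) = 0 :=
      fun C _ hc => if_neg hc
    have ite1 : ∀ (C : Prop) [Decidable C], C → (if C then (1:ℕ) else 0) = 1 :=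
      fun C _ hc => if_pos hc
    by_cases hv : v ≤ f r
    · rcases Nat.lt_trichotomy (r : ℕ) (i : ℕ) with h | h | h
      · have h3 : r ≠ i := fun e => by rw [e] at h; omega
        rw [ite1 ((r : ℕ) < j ∧ v ≤ f r) ⟨by omega, hv⟩,
          ite1 ((r : ℕ) < (i : ℕ) ∧ v ≤ f r) ⟨h, hv⟩,
          ite0 (r = i ∧ v ≤ f r) (fun hc => h3 hc.1),
          ite0 ((i : ℕ) < (r : ℕ) ∧ (r : ℕ) < j ∧ v ≤ f r) (fun hc => by omega)]
      · have h3 : r = i := Fin.ext h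
        subst h3
        rw [ite1 ((r : ℕ) < j ∧ v ≤ f r) ⟨hij, hv⟩,
          ite0 ((r : ℕ) < (r : ℕ) ∧ v ≤ f r) (fun hc => by omega),
          ite1 (r = r ∧ v ≤ f r) ⟨rfl, hv⟩,
          ite0 ((r : ℕ) < (r : ℕ) ∧ (r : ℕ) < j ∧ v ≤ f r) (fun hc => by omega)]
      · have h3 : r ≠ i := fun e => by rw [e] at h; omega
        rw [ite0 ((r : ℕ) < (i : ℕ) ∧ v ≤ f r) (fun hc => by omega),
          ite0 (r = i ∧ v ≤ f r) (fun hc => h3 hc.1)]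
        by_cases hj : (r : ℕ) < j
        · rw [ite1 ((r : ℕ) < j ∧ v ≤ f r) ⟨hj, hv⟩,
            ite1 ((i : ℕ) < (r : ℕ) ∧ (r : ℕ) < j ∧ v ≤ f r) ⟨h, hj, hv⟩]
        · rw [ite0 ((r : ℕ) < j ∧ v ≤ f r) (fun hc => hj hc.1),
            ite0 ((i : ℕ) < (r : ℕ) ∧ (r : ℕ) < j ∧ v ≤ f r) (fun hc => hj hc.2.1)]
    · rw [ite0 ((r : ℕ) < j ∧ v ≤ f r) (fun hc => hv hc.2),
        ite0 ((r : ℕ) < (i : ℕ) ∧ v ≤ f r) (fun hc => hv hc.2),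
        ite0 (r = i ∧ v ≤ f r) (fun hc => hv hc.2),
        ite0 ((i : ℕ) < (r : ℕ) ∧ (r : ℕ) < j ∧ v ≤ f r) (fun hc => hv hc.2.2)]
  rw [Finset.sum_congr rfl (fun r _ => key r), Finset.sum_add_distrib,
    Finset.sum_add_distrib]
  congr 2
  rw [show (if v ≤ f i then 1 else 0) = if i = i ∧ v ≤ f i then 1 else 0 by simp]
  rw [Finset.sum_eq_single i (fun b _ hb => by simp [hb]) (by simp)]

lemma cntmid_zero (f : Fin n → ℕ) (i : Fin n) (v : ℕ) : cntmid f i ((i : ℕ) + 1) v = 0 := by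
  unfold cntmid
  rw [Finset.card_eq_zero, Finset.filter_eq_empty_iff]
  intro r _
  omega

lemma cnt_one_point {f g : Fin n → ℕ} (i : Fin n) (j v : ℕ)
    (h : ∀ r : Fin n, r ≠ i → (r : ℕ) < j → f r = g r) :
    cnt f j v + (if (i : ℕ) < j ∧ v ≤ g i then 1 else 0)
      = cnt g j v + (if (i : ℕ) < j ∧ v ≤ f i then 1 else 0) := by
  unfold cnt
  rw [Finset.card_filter, Finset.card_filter]
  rw [← Finset.add_sum_erase _ _ (Finset.mem_univ i), ← Finset.add_sum_erase _ _ (Finset.mem_univ i)]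
  have hs : ∀ r ∈ Finset.univ.erase i,
      (if (r : ℕ) < j ∧ v ≤ f r then 1 else 0) = (if (r : ℕ) < j ∧ v ≤ g r then 1 else 0) := by
    intro r hr
    have hri : r ≠ i := Finset.ne_of_mem_erase hr
    by_cases hj : (r : ℕ) < j
    · rw [h r hri hj]
    · simp [hj]
  rw [Finset.sum_congr rfl hs]
  split_ifs <;> omega

lemma cnt_two_point {f g : Fin n → ℕ} (i k : Fin n) (hik : i ≠ k) (j v : ℕ)
    (h : ∀ r : Fin n, r ≠ i → r ≠ k → (r : ℕ) < j → f r = g r) :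
    cnt f j v + (if (i : ℕ) < j ∧ v ≤ g i then 1 else 0) + (if (k : ℕ) < j ∧ v ≤ g k then 1 else 0)
      = cnt g j v + (if (i : ℕ) < j ∧ v ≤ f i then 1 else 0)
        + (if (k : ℕ) < j ∧ v ≤ f k then 1 else 0) := by
  unfold cnt
  rw [Finset.card_filter, Finset.card_filter]
  rw [← Finset.add_sum_erase _ _ (Finset.mem_univ i), ← Finset.add_sum_erase _ _ (Finset.mem_univ i)]
  have hk : k ∈ Finset.univ.erase i := Finset.mem_erase.2 ⟨fun h => hik h.symm, Finset.mem_univ k⟩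
  rw [← Finset.add_sum_erase _ _ hk, ← Finset.add_sum_erase _ _ hk]
  have hs : ∀ r ∈ (Finset.univ.erase i).erase k,
      (if (r : ℕ) < j ∧ v ≤ f r then 1 else 0) = (if (r : ℕ) < j ∧ v ≤ g r then 1 else 0) := by
    intro r hr
    have hrk : r ≠ k := Finset.ne_of_mem_erase hr
    have hri : r ≠ i := Finset.ne_of_mem_erase (Finset.mem_of_mem_erase hr)
    by_cases hj : (r : ℕ) < j
    · rw [h r hri hrk hj]
    · simp [hj]
  rw [Finset.sum_congr rfl hs]
  split_ifs <;> omega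

/-- If counts agree up to level `J`, values agree on rows below `J`. -/
lemma eq_upto {f g : Fin n → ℕ} {J : ℕ} (h : ∀ j, j ≤ J → ∀ v, cnt f j v = cnt g j v) :
    ∀ r : Fin n, (r : ℕ) < J → f r = g r := by
  intro r hr
  have key : ∀ v, (if v ≤ f r then 1 else 0) = (if v ≤ g r then 1 else 0) := by
    intro v
    have sf := cnt_split f r (show (r : ℕ) < (r : ℕ) + 1 by omega) v
    have sg := cnt_split g r (show (r : ℕ) < (r : ℕ) + 1 by omega) v
    have mf := cntmid_zero f r v
    have mg := cntmid_zero g r v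
    have h1 := h ((r : ℕ) + 1) (by omega) v
    have h0 := h (r : ℕ) (by omega) v
    omega
  have hf := key (f r)
  have hg := key (g r)
  split_ifs at hf hg <;> omega

lemma eq_of_ind {a b : ℕ} (h : ∀ v, (if v ≤ a then 1 else 0) = (if v ≤ b then 1 else 0)) :
    a = b := by
  have hf := h a
  have hg := h b
  split_ifs at hf hg <;> omega

end Aux3
section Aux4
open Finset
variable {n : ℕ} {lam : Partition n}

lemma Placement.ext' {x y : Placement lam} (h : x.col = y.col) : x = y := by
  cases x; cases y; simpa using h

lemma push_cnt {y x : Placement lam} {i : Fin n} (h : PushMove y x i) (j v : ℕ) :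
    cnt y.col j v = cnt x.col j v +
      (if (i : ℕ) < j ∧ x.col i < v ∧ v ≤ y.col i then 1 else 0) := by
  obtain ⟨c, hc1, hc2, hcempty, hbetween, hxi, hoff⟩ := h
  have key := cnt_one_point (f := x.col) (g := y.col) i j v (fun r hr _ => hoff r hr)
  rw [hxi] at key ⊢
  split_ifs at key ⊢ <;> omega

lemma switch_cnt {y x : Placement lam} {i k : Fin n} (h : SwitchMove y x i k) (j v : ℕ) :
    cnt y.col j v = cnt x.col j v +
      (if (i : ℕ) < j ∧ j ≤ (k : ℕ) ∧ y.col k < v ∧ v ≤ y.col i then 1 else 0) := by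
  obtain ⟨hik, hba, hrect, hxi, hxk, hoff⟩ := h
  have hik' : (i : ℕ) < (k : ℕ) := hik
  have hne : i ≠ k := Fin.ne_of_lt hik
  have key := cnt_two_point (f := x.col) (g := y.col) i k hne j v
    (fun r h1 h2 _ => hoff r h1 h2)
  rw [hxi, hxk] at key
  split_ifs at key ⊢ <;> omega

end Aux4
section Aux5
open Finset
variable {n : ℕ} {lam : Partition n}

lemma push_squeeze {y x z : Placement lam} {i : Fin n} (hmove : PushMove y x i)
    (hxz : ∀ j v, cnt x.col j v ≤ cnt z.col j v)
    (hzy : ∀ j v, cnt z.col j v ≤ cnt y.col j v) :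
    z = x ∨ z = y := by
  have hform0 := push_cnt hmove
  obtain ⟨c, hc1, hc2, hcempty, hbetween, hxi, hoff⟩ := hmove
  set a := y.col i with ha
  have hform : ∀ j v, cnt y.col j v = cnt x.col j v +
      (if (i : ℕ) < j ∧ c < v ∧ v ≤ a then 1 else 0) := by
    intro j v
    have := hform0 j v
    rwa [hxi] at this
  have houts : ∀ j v, ¬((i : ℕ) < j ∧ c < v ∧ v ≤ a) → cnt z.col j v = cnt y.col j v := by
    intro j v hw
    have h1 := hform j v
    rw [if_neg hw] at h1
    have := hxz j v
    have := hzy j v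
    omega
  have hlow : ∀ r : Fin n, (r : ℕ) < (i : ℕ) → z.col r = y.col r :=
    eq_upto (fun j hj v => houts j v (fun hw => by omega))
  have hzcnt_i : ∀ v, cnt z.col (i : ℕ) v = cnt y.col (i : ℕ) v := fun v => cnt_congr v hlow
  have keyi : ∀ v, ¬(c < v ∧ v ≤ a) → (if v ≤ z.col i then 1 else 0) = (if v ≤ a then 1 else 0) := by
    intro v hv
    have s1 := cnt_split z.col i (show (i : ℕ) < (i : ℕ) + 1 by omega) v
    have s2 := cnt_split y.col i (show (i : ℕ) < (i : ℕ) + 1 by omega) v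
    have m1 := cntmid_zero z.col i v
    have m2 := cntmid_zero y.col i v
    have e1 := houts ((i : ℕ) + 1) v (fun hw => hv ⟨hw.2.1, hw.2.2⟩)
    have e0 := hzcnt_i v
    rw [← ha] at s2
    omega
  have hzi_le : z.col i ≤ a := by
    have := keyi (a + 1) (by omega)
    split_ifs at this <;> omega
  have hzi_ge : c ≤ z.col i := by
    have := keyi c (by omega)
    split_ifs at this <;> omega
  have hup : ∀ M : ℕ, ∀ r : Fin n, (r : ℕ) ≤ M → (i : ℕ) < (r : ℕ) → z.col r = y.col r := by
    intro M
    induction M with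
    | zero => intro r h0 hi; omega
    | succ M ih =>
      intro r hrM hir
      by_cases hle : (r : ℕ) ≤ M
      · exact ih r hle hir
      have hpre : ∀ s : Fin n, s ≠ i → (s : ℕ) < (r : ℕ) → z.col s = y.col s := by
        intro s hsi hs
        rcases Nat.lt_trichotomy (s : ℕ) (i : ℕ) with h | h | h
        · exact hlow s h
        · exact absurd (Fin.ext h) hsi
        · exact ih s (by omega) h
      have key : ∀ v, ¬(c < v ∧ v ≤ a) →
          (if v ≤ z.col r then 1 else 0) = (if v ≤ y.col r then 1 else 0) := by
        intro v hv
        have e1 : cnt z.col ((r : ℕ) + 1) v = cnt y.col ((r : ℕ) + 1) v :=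
          houts _ v (fun hw => hv ⟨hw.2.1, hw.2.2⟩)
        have e0 : cnt z.col (r : ℕ) v = cnt y.col (r : ℕ) v := by
          have op := cnt_one_point (f := z.col) (g := y.col) i (r : ℕ) v hpre
          rw [← ha] at op
          have hii : (if (i : ℕ) < (r : ℕ) ∧ v ≤ a then 1 else 0)
              = (if (i : ℕ) < (r : ℕ) ∧ v ≤ z.col i then 1 else 0) := by
            split_ifs <;> omega
          omega
        have s1 := cnt_split z.col r (show (r : ℕ) < (r : ℕ) + 1 by omega) v
        have s2 := cnt_split y.col r (show (r : ℕ) < (r : ℕ) + 1 by omega) v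
        have m1 := cntmid_zero z.col r v
        have m2 := cntmid_zero y.col r v
        omega
      have hri : r ≠ i := fun e => by rw [e] at hir; omega
      have hyr : y.col r < c ∨ a < y.col r := by
        rcases Nat.lt_trichotomy (y.col r) c with h | h | h
        · exact Or.inl h
        · exact absurd h (hcempty r)
        · rcases Nat.lt_trichotomy (y.col r) a with h2 | h2 | h2
          · obtain ⟨s, hsi, hs⟩ := hbetween (y.col r) h h2
            have hsr : s = r := y.inj hs
            have : (s : ℕ) < (i : ℕ) := hsi
            rw [hsr] at this
            omega
          · exact absurd (y.inj h2) hri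
          · exact Or.inr h2
      rcases hyr with h | h
      · have k1 := key (y.col r) (by omega)
        have k2 := key (y.col r + 1) (by omega)
        split_ifs at k1 k2 <;> omega
      · have k1 := key (y.col r) (by omega)
        have k2 := key (y.col r + 1) (by omega)
        split_ifs at k1 k2 <;> omega
  have hupper : ∀ r : Fin n, (i : ℕ) < (r : ℕ) → z.col r = y.col r :=
    fun r hr => hup (r : ℕ) r le_rfl hr
  have hoffz : ∀ r : Fin n, r ≠ i → z.col r = y.col r := by
    intro r hr
    rcases Nat.lt_trichotomy (r : ℕ) (i : ℕ) with h | h | h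
    · exact hlow r h
    · exact absurd (Fin.ext h) hr
    · exact hupper r h
  have hzi : z.col i = c ∨ z.col i = a := by
    by_contra hcon
    push_neg at hcon
    have h1 : c < z.col i := by omega
    have h2 : z.col i < a := by omega
    obtain ⟨s, hsi, hs⟩ := hbetween (z.col i) h1 h2
    have hsi' : (s : ℕ) < (i : ℕ) := hsi
    have : z.col s = z.col i := by rw [hlow s hsi', hs]
    have := z.inj this
    rw [this] at hsi'
    omega
  rcases hzi with h | h
  · left
    apply Placement.ext'
    funext r
    rcases eq_or_ne r i with rfl | hr
    · rw [h, hxi]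
    · rw [hoffz r hr, hoff r hr]
  · right
    apply Placement.ext'
    funext r
    rcases eq_or_ne r i with rfl | hr
    · rw [h]
    · exact hoffz r hr

end Aux5
section Aux5b
open Finset
variable {n : ℕ} {lam : Partition n}

lemma switch_squeeze {y x z : Placement lam} {i k : Fin n} (hmove : SwitchMove y x i k)
    (hxz : ∀ j v, cnt x.col j v ≤ cnt z.col j v)
    (hzy : ∀ j v, cnt z.col j v ≤ cnt y.col j v) :
    z = x ∨ z = y := by
  have hform0 := switch_cnt hmove
  obtain ⟨hik, hba, hrect, hxi, hxk, hoff⟩ := hmove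
  set a := y.col i with ha
  set b := y.col k with hb
  have hik' : (i : ℕ) < (k : ℕ) := hik
  have hform : ∀ j v, cnt y.col j v = cnt x.col j v +
      (if (i : ℕ) < j ∧ j ≤ (k : ℕ) ∧ b < v ∧ v ≤ a then 1 else 0) := hform0
  have houts : ∀ j v, ¬((i : ℕ) < j ∧ j ≤ (k : ℕ) ∧ b < v ∧ v ≤ a) →
      cnt z.col j v = cnt y.col j v := by
    intro j v hw
    have h1 := hform j v
    rw [if_neg hw] at h1
    have := hxz j v
    have := hzy j v
    omega
  have hlow : ∀ r : Fin n, (r : ℕ) < (i : ℕ) → z.col r = y.col r :=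
    eq_upto (fun j hj v => houts j v (fun hw => by omega))
  have hzcnt_i : ∀ v, cnt z.col (i : ℕ) v = cnt y.col (i : ℕ) v := fun v => cnt_congr v hlow
  have keyi : ∀ v, ¬(b < v ∧ v ≤ a) → (if v ≤ z.col i then 1 else 0) = (if v ≤ a then 1 else 0) := by
    intro v hv
    have s1 := cnt_split z.col i (show (i : ℕ) < (i : ℕ) + 1 by omega) v
    have s2 := cnt_split y.col i (show (i : ℕ) < (i : ℕ) + 1 by omega) v
    have m1 := cntmid_zero z.col i v
    have m2 := cntmid_zero y.col i v
    have e1 := houts ((i : ℕ) + 1) v (fun hw => hv ⟨hw.2.2.1, hw.2.2.2⟩)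
    have e0 := hzcnt_i v
    rw [← ha] at s2
    omega
  have hzi_le : z.col i ≤ a := by
    have := keyi (a + 1) (by omega)
    split_ifs at this <;> omega
  have hzi_ge : b ≤ z.col i := by
    have := keyi b (by omega)
    split_ifs at this <;> omega
  -- middle rows
  have hmidM : ∀ M : ℕ, ∀ r : Fin n, (r : ℕ) ≤ M → (i : ℕ) < (r : ℕ) → (r : ℕ) < (k : ℕ) →
      z.col r = y.col r := by
    intro M
    induction M with
    | zero => intro r h0 hi _; omega
    | succ M ih =>
      intro r hrM hir hrk
      by_cases hle : (r : ℕ) ≤ M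
      · exact ih r hle hir hrk
      have hpre : ∀ s : Fin n, s ≠ i → (s : ℕ) < (r : ℕ) → z.col s = y.col s := by
        intro s hsi hs
        rcases Nat.lt_trichotomy (s : ℕ) (i : ℕ) with h | h | h
        · exact hlow s h
        · exact absurd (Fin.ext h) hsi
        · exact ih s (by omega) h (by omega)
      have key : ∀ v, ¬(b < v ∧ v ≤ a) →
          (if v ≤ z.col r then 1 else 0) = (if v ≤ y.col r then 1 else 0) := by
        intro v hv
        have e1 : cnt z.col ((r : ℕ) + 1) v = cnt y.col ((r : ℕ) + 1) v :=
          houts _ v (fun hw => hv ⟨hw.2.2.1, hw.2.2.2⟩)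
        have e0 : cnt z.col (r : ℕ) v = cnt y.col (r : ℕ) v := by
          have op := cnt_one_point (f := z.col) (g := y.col) i (r : ℕ) v hpre
          rw [← ha] at op
          have hii : (if (i : ℕ) < (r : ℕ) ∧ v ≤ a then 1 else 0)
              = (if (i : ℕ) < (r : ℕ) ∧ v ≤ z.col i then 1 else 0) := by
            split_ifs <;> omega
          omega
        have s1 := cnt_split z.col r (show (r : ℕ) < (r : ℕ) + 1 by omega) v
        have s2 := cnt_split y.col r (show (r : ℕ) < (r : ℕ) + 1 by omega) v
        have m1 := cntmid_zero z.col r v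
        have m2 := cntmid_zero y.col r v
        omega
      have hri : r ≠ i := fun e => by rw [e] at hir; omega
      have hrk' : r ≠ k := fun e => by rw [e] at hrk; omega
      have hyr : y.col r < b ∨ a < y.col r := by
        by_contra hcon
        push_neg at hcon
        have h1 : b ≤ y.col r := by omega
        have h2 : y.col r ≤ a := by omega
        have := hrect r (Fin.le_def.2 (by omega)) (Fin.le_def.2 (by omega)) h1 h2
        rcases this with h | h
        · exact hri h
        · exact hrk' h
      rcases hyr with h | h
      · have k1 := key (y.col r) (by omega)
        have k2 := key (y.col r + 1) (by omega)
        split_ifs at k1 k2 <;> omega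
      · have k1 := key (y.col r) (by omega)
        have k2 := key (y.col r + 1) (by omega)
        split_ifs at k1 k2 <;> omega
  have hmid : ∀ r : Fin n, (i : ℕ) < (r : ℕ) → (r : ℕ) < (k : ℕ) → z.col r = y.col r :=
    fun r h1 h2 => hmidM (r : ℕ) r le_rfl h1 h2
  have hprek : ∀ s : Fin n, s ≠ i → (s : ℕ) < (k : ℕ) → z.col s = y.col s := by
    intro s hsi hs
    rcases Nat.lt_trichotomy (s : ℕ) (i : ℕ) with h | h | h
    · exact hlow s h
    · exact absurd (Fin.ext h) hsi
    · exact hmid s h hs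
  -- the key equation at row k
  have E : ∀ v, (if v ≤ z.col i then 1 else 0) + (if v ≤ z.col k then 1 else 0)
      = (if v ≤ a then 1 else 0) + (if v ≤ b then 1 else 0) := by
    intro v
    have e1 : cnt z.col ((k : ℕ) + 1) v = cnt y.col ((k : ℕ) + 1) v :=
      houts _ v (fun hw => by omega)
    have s1 := cnt_split z.col k (show (k : ℕ) < (k : ℕ) + 1 by omega) v
    have s2 := cnt_split y.col k (show (k : ℕ) < (k : ℕ) + 1 by omega) v
    have m1 := cntmid_zero z.col k v
    have m2 := cntmid_zero y.col k v
    have op := cnt_one_point (f := z.col) (g := y.col) i (k : ℕ) v hprek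
    rw [← ha] at op
    rw [← hb] at s2
    split_ifs at op s1 s2 ⊢ <;> omega
  -- rows above k
  have hupM : ∀ M : ℕ, ∀ r : Fin n, (r : ℕ) ≤ M → (k : ℕ) < (r : ℕ) → z.col r = y.col r := by
    intro M
    induction M with
    | zero => intro r h0 hi; omega
    | succ M ih =>
      intro r hrM hkr
      by_cases hle : (r : ℕ) ≤ M
      · exact ih r hle hkr
      have hpre2 : ∀ s : Fin n, s ≠ i → s ≠ k → (s : ℕ) < (r : ℕ) → z.col s = y.col s := by
        intro s hsi hsk hs
        rcases Nat.lt_trichotomy (s : ℕ) (k : ℕ) with h | h | h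
        · exact hprek s hsi h
        · exact absurd (Fin.ext h) hsk
        · exact ih s (by omega) h
      have hnik : i ≠ k := fun e => by rw [e] at hik'; omega
      have key : ∀ v, (if v ≤ z.col r then 1 else 0) = (if v ≤ y.col r then 1 else 0) := by
        intro v
        have e1 : cnt z.col ((r : ℕ) + 1) v = cnt y.col ((r : ℕ) + 1) v :=
          houts _ v (fun hw => by omega)
        have e0 : cnt z.col (r : ℕ) v = cnt y.col (r : ℕ) v := by
          have op := cnt_two_point (f := z.col) (g := y.col) i k hnik (r : ℕ) v hpre2
          rw [← ha, ← hb] at op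
          have hE := E v
          split_ifs at op hE <;> omega
        have s1 := cnt_split z.col r (show (r : ℕ) < (r : ℕ) + 1 by omega) v
        have s2 := cnt_split y.col r (show (r : ℕ) < (r : ℕ) + 1 by omega) v
        have m1 := cntmid_zero z.col r v
        have m2 := cntmid_zero y.col r v
        omega
      exact eq_of_ind key
  have hup : ∀ r : Fin n, (k : ℕ) < (r : ℕ) → z.col r = y.col r :=
    fun r hr => hupM (r : ℕ) r le_rfl hr
  by_cases hza : z.col i = a
  · right
    have hzk : z.col k = b := by
      apply eq_of_ind
      intro v
      have := E v
      rw [hza] at this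
      omega
    apply Placement.ext'
    funext r
    rcases Nat.lt_trichotomy (r : ℕ) (i : ℕ) with h | h | h
    · exact hlow r h
    · rw [Fin.ext h, hza]
    · rcases Nat.lt_trichotomy (r : ℕ) (k : ℕ) with h2 | h2 | h2
      · exact hmid r h h2
      · rw [Fin.ext h2, hzk]
      · exact hup r h2
  · left
    have hzi_lt : z.col i < a := by omega
    have h1 : z.col i + 1 ≤ z.col k := by
      have := E (z.col i + 1)
      split_ifs at this <;> omega
    have hzib : z.col i = b := by
      have := E (z.col i)
      split_ifs at this <;> omega
    have hzka : z.col k = a := by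
      apply eq_of_ind
      intro v
      have := E v
      rw [hzib] at this
      omega
    apply Placement.ext'
    funext r
    rcases Nat.lt_trichotomy (r : ℕ) (i : ℕ) with h | h | h
    · rw [hlow r h, hoff r (fun e => by rw [e] at h; omega) (fun e => by rw [e] at h; omega)]
    · rw [Fin.ext h, hzib, hxi]
    · rcases Nat.lt_trichotomy (r : ℕ) (k : ℕ) with h2 | h2 | h2
      · rw [hmid r h h2,
          hoff r (fun e => by rw [e] at h; omega) (fun e => by rw [e] at h2; omega)]
      · rw [Fin.ext h2, hzka, hxk]
      · rw [hup r h2,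
          hoff r (fun e => by rw [e] at h; omega) (fun e => by rw [e] at h2; omega)]

end Aux5b
section Aux6
open Finset
variable {n : ℕ} {lam : Partition n}

lemma cnt_strict {x y : Fin n → ℕ} (hcnt : ∀ j v, cnt x j v ≤ cnt y j v)
    (i : Fin n) (hlow : ∀ r : Fin n, (r : ℕ) < (i : ℕ) → x r = y r)
    {j v : ℕ} (hij : (i : ℕ) < j) (hv1 : x i < v) (hv2 : v ≤ y i)
    (hmid : ∀ r : Fin n, (i : ℕ) < (r : ℕ) → (r : ℕ) < j → ¬(x i ≤ y r ∧ y r < y i)) :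
    cnt x j v < cnt y j v := by
  have sxv := cnt_split x i hij v
  have syv := cnt_split y i hij v
  have sxw := cnt_split x i hij (x i)
  have syw := cnt_split y i hij (x i)
  have e0v : cnt x (i : ℕ) v = cnt y (i : ℕ) v := cnt_congr v hlow
  have e0w : cnt x (i : ℕ) (x i) = cnt y (i : ℕ) (x i) := cnt_congr _ hlow
  have hw := hcnt j (x i)
  have m1 : cntmid x i j v ≤ cntmid x i j (x i) := by
    apply Finset.card_le_card
    intro r hr
    simp only [Finset.mem_filter] at hr ⊢
    exact ⟨hr.1, hr.2.1, hr.2.2.1, by omega⟩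
  have m2 : cntmid y i j (x i) = cntmid y i j v := by
    unfold cntmid
    congr 1
    apply Finset.filter_congr
    intro r _
    constructor
    · intro ⟨h1, h2, h3⟩
      exact ⟨h1, h2, by have := hmid r h1 h2; omega⟩
    · intro ⟨h1, h2, h3⟩
      exact ⟨h1, h2, by have := hmid r h1 h2; omega⟩
  split_ifs at sxv syv sxw syw <;> omega

lemma exists_move (x y : Placement lam) (hxy : rle x y) (hne : x ≠ y) :
    ∃ z : Placement lam, ((∃ i k, SwitchMove y z i k) ∨ (∃ i, PushMove y z i)) ∧
      rle x z ∧ rle z y ∧ z ≠ y := by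
  have hcnt := rle_iff_cnt.1 hxy
  have hD : (Finset.univ.filter fun r : Fin n => x.col r ≠ y.col r).Nonempty := by
    rcases Finset.eq_empty_or_nonempty (Finset.univ.filter fun r : Fin n => x.col r ≠ y.col r)
      with he | h
    · exfalso
      apply hne
      apply Placement.ext'
      funext r
      by_contra hc
      have : r ∈ Finset.univ.filter fun r : Fin n => x.col r ≠ y.col r :=
        Finset.mem_filter.2 ⟨Finset.mem_univ r, hc⟩
      rw [he] at this
      exact absurd this (Finset.notMem_empty r)
    · exact h
  set D := Finset.univ.filter fun r : Fin n => x.col r ≠ y.col r with hDdef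
  set i := D.min' hD with hidef
  have hi_diff : x.col i ≠ y.col i := (Finset.mem_filter.1 (D.min'_mem hD)).2
  have hlow : ∀ r : Fin n, (r : ℕ) < (i : ℕ) → x.col r = y.col r := by
    intro r hr
    by_contra hc
    have : i ≤ r := D.min'_le r (Finset.mem_filter.2 ⟨Finset.mem_univ r, hc⟩)
    rw [Fin.le_def] at this
    omega
  have hxi_lt : x.col i < y.col i := by
    have s1 := cnt_split x.col i (show (i : ℕ) < (i : ℕ) + 1 by omega) (x.col i)
    have s2 := cnt_split y.col i (show (i : ℕ) < (i : ℕ) + 1 by omega) (x.col i)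
    have m1 := cntmid_zero x.col i (x.col i)
    have m2 := cntmid_zero y.col i (x.col i)
    have e0 : cnt x.col (i : ℕ) (x.col i) = cnt y.col (i : ℕ) (x.col i) := cnt_congr _ hlow
    have hle := hcnt ((i : ℕ) + 1) (x.col i)
    have : x.col i ≤ y.col i := by split_ifs at s1 s2 <;> omega
    omega
  set K := Finset.univ.filter fun r : Fin n =>
    (i : ℕ) < (r : ℕ) ∧ x.col i ≤ y.col r ∧ y.col r < y.col i with hKdef
  rcases Finset.eq_empty_or_nonempty K with hKe | hK
  · -- push move
    have hKe' : ∀ r : Fin n, ¬((i : ℕ) < (r : ℕ) ∧ x.col i ≤ y.col r ∧ y.col r < y.col i) := by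
      intro r hc
      have : r ∈ K := Finset.mem_filter.2 ⟨Finset.mem_univ r, hc⟩
      rw [hKe] at this
      exact absurd this (Finset.notMem_empty r)
    set C := (Finset.Icc (x.col i) (y.col i - 1)).filter
      (fun d => ∀ r : Fin n, y.col r ≠ d) with hCdef
    have hCne : C.Nonempty := by
      refine ⟨x.col i, Finset.mem_filter.2 ⟨Finset.mem_Icc.2 ⟨le_rfl, by omega⟩, ?_⟩⟩
      intro r
      rcases Nat.lt_trichotomy (r : ℕ) (i : ℕ) with h | h | h
      · rw [← hlow r h]
        intro hc
        have : r = i := x.inj hc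
        rw [this] at h
        omega
      · rw [Fin.ext h]
        exact fun hc => hi_diff hc.symm
      · exact fun hc => hKe' r ⟨h, by omega, by omega⟩
    set c := C.max' hCne with hcdef
    obtain ⟨hIcc, hcempty⟩ := Finset.mem_filter.1 (C.max'_mem hCne)
    obtain ⟨hc1, hc2⟩ := Finset.mem_Icc.1 hIcc
    have hcy : c < y.col i := by omega
    have hc_pos : 1 ≤ c := le_trans (x.pos i) hc1
    have hbetween : ∀ d : ℕ, c < d → d < y.col i → ∃ r : Fin n, r < i ∧ y.col r = d := by
      intro d h1 h2
      have hd_notin : d ∉ C := fun hd => by have := C.le_max' d hd; omega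
      have hocc : ¬ (∀ r : Fin n, y.col r ≠ d) := fun hp =>
        hd_notin (Finset.mem_filter.2 ⟨Finset.mem_Icc.2 ⟨by omega, by omega⟩, hp⟩)
      push_neg at hocc
      obtain ⟨r, hr⟩ := hocc
      refine ⟨r, ?_, hr⟩
      rcases Nat.lt_trichotomy (r : ℕ) (i : ℕ) with h | h | h
      · exact Fin.lt_def.2 h
      · exfalso; rw [Fin.ext h] at hr; omega
      · exact absurd ⟨h, by omega, by omega⟩ (hKe' r)
    have zinj : Function.Injective (Function.update y.col i c) := by
      intro r s h
      rcases eq_or_ne r i with rfl | hr <;> rcases eq_or_ne s i with rfl | hs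
      · rfl
      · rw [Function.update_self, Function.update_of_ne hs] at h
        exact absurd h.symm (hcempty s)
      · rw [Function.update_self, Function.update_of_ne hr] at h
        exact absurd h (hcempty r)
      · rw [Function.update_of_ne hr, Function.update_of_ne hs] at h
        exact y.inj h
    have zpos : ∀ r, 1 ≤ Function.update y.col i c r := by
      intro r
      rcases eq_or_ne r i with rfl | hr
      · rw [Function.update_self]; exact hc_pos
      · rw [Function.update_of_ne hr]; exact y.pos r
    have zle : ∀ r, Function.update y.col i c r ≤ lam.part r := by
      intro r
      rcases eq_or_ne r i with rfl | hr
      · rw [Function.update_self]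
        exact le_trans (by omega) (y.le_part i)
      · rw [Function.update_of_ne hr]; exact y.le_part r
    set z : Placement lam := ⟨Function.update y.col i c, zinj, zpos, zle⟩ with hzdef
    have hzcol : ∀ r : Fin n, z.col r = Function.update y.col i c r := fun r => rfl
    have hpm : PushMove y z i :=
      ⟨c, hc_pos, hcy, hcempty, hbetween,
        Function.update_self i c y.col, fun r hr => Function.update_of_ne hr c y.col⟩
    have hxz : rle x z := by
      apply rle_iff_cnt.2
      intro j v
      have hf := push_cnt hpm j v
      have hzi : z.col i = c := Function.update_self i c y.col
      rw [hzi] at hf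
      by_cases hwin : (i : ℕ) < j ∧ c < v ∧ v ≤ y.col i
      · rw [if_pos hwin] at hf
        have hstrict := cnt_strict hcnt i hlow hwin.1 (by omega) hwin.2.2
          (fun r h1 h2 hc => hKe' r ⟨h1, hc.1, hc.2⟩)
        omega
      · rw [if_neg hwin] at hf
        have := hcnt j v
        omega
    have hzy : rle z y := by
      apply rle_iff_cnt.2
      intro j v
      have hf := push_cnt hpm j v
      omega
    have hzne : z ≠ y := by
      intro he
      have := congrFun (congrArg Placement.col he) i
      rw [hzcol i, Function.update_self] at this
      omega
    exact ⟨z, Or.inr ⟨i, hpm⟩, hxz, hzy, hzne⟩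
  · -- switch move
    set k := K.min' hK with hkdef
    obtain ⟨-, hik, hbk, hka⟩ := Finset.mem_filter.1 (K.min'_mem hK)
    rw [← hkdef] at hik hbk hka
    have hkmin : ∀ r : Fin n, (i : ℕ) < (r : ℕ) → x.col i ≤ y.col r → y.col r < y.col i →
        (k : ℕ) ≤ (r : ℕ) := by
      intro r h1 h2 h3
      have : k ≤ r := K.min'_le r (Finset.mem_filter.2 ⟨Finset.mem_univ r, h1, h2, h3⟩)
      exact Fin.le_def.1 this
    have hikf : i < k := Fin.lt_def.2 hik
    have hinek : i ≠ k := Fin.ne_of_lt hikf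
    have zle : ∀ r, (y.col ∘ Equiv.swap i k) r ≤ lam.part r := by
      intro r
      rcases eq_or_ne r i with rfl | hr
      · simp only [Function.comp_apply, Equiv.swap_apply_left]
        exact le_trans (by omega) (y.le_part i)
      rcases eq_or_ne r k with rfl | hr2
      · simp only [Function.comp_apply, Equiv.swap_apply_right]
        exact le_trans (y.le_part i) (lam.mono (le_of_lt hikf))
      · simp only [Function.comp_apply, Equiv.swap_apply_of_ne_of_ne hr hr2]
        exact y.le_part r
    set z : Placement lam := ⟨y.col ∘ Equiv.swap i k,
      y.inj.comp (Equiv.swap i k).injective, fun r => y.pos _, zle⟩ with hzdef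
    have hzi : z.col i = y.col k := by
      show (y.col ∘ Equiv.swap i k) i = y.col k
      simp only [Function.comp_apply, Equiv.swap_apply_left]
    have hzk : z.col k = y.col i := by
      show (y.col ∘ Equiv.swap i k) k = y.col i
      simp only [Function.comp_apply, Equiv.swap_apply_right]
    have hzoff : ∀ r : Fin n, r ≠ i → r ≠ k → z.col r = y.col r := by
      intro r h1 h2
      show (y.col ∘ Equiv.swap i k) r = y.col r
      simp only [Function.comp_apply, Equiv.swap_apply_of_ne_of_ne h1 h2]
    have hrect : ∀ r : Fin n, i ≤ r → r ≤ k → y.col k ≤ y.col r → y.col r ≤ y.col i →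
        r = i ∨ r = k := by
      intro r h1 h2 h3 h4
      by_contra hcon
      push_neg at hcon
      obtain ⟨hri, hrk⟩ := hcon
      have h1' : (i : ℕ) < (r : ℕ) := by
        have := Fin.le_def.1 h1
        rcases Nat.lt_or_ge (i : ℕ) (r : ℕ) with h | h
        · exact h
        · exact absurd (Fin.ext (by omega)) hri
      have h2' : (r : ℕ) < (k : ℕ) := by
        have := Fin.le_def.1 h2
        rcases Nat.lt_or_ge (r : ℕ) (k : ℕ) with h | h
        · exact h
        · exact absurd (Fin.ext (by omega)) hrk
      have hyr_lt : y.col r < y.col i := by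
        rcases Nat.lt_or_ge (y.col r) (y.col i) with h | h
        · exact h
        · exact absurd (y.inj (by omega)) hri
      have := hkmin r h1' (by omega) hyr_lt
      omega
    have hsm : SwitchMove y z i k := ⟨hikf, hka, hrect, hzi, hzk, hzoff⟩
    have hxz : rle x z := by
      apply rle_iff_cnt.2
      intro j v
      have hf := switch_cnt hsm j v
      by_cases hwin : (i : ℕ) < j ∧ j ≤ (k : ℕ) ∧ y.col k < v ∧ v ≤ y.col i
      · rw [if_pos hwin] at hf
        have hstrict := cnt_strict hcnt i hlow hwin.1 (by omega) hwin.2.2.2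
          (fun r h1 h2 hc => by
            have := hkmin r h1 hc.1 hc.2
            omega)
        omega
      · rw [if_neg hwin] at hf
        have := hcnt j v
        omega
    have hzy : rle z y := by
      apply rle_iff_cnt.2
      intro j v
      have hf := switch_cnt hsm j v
      omega
    have hzne : z ≠ y := by
      intro he
      have := congrFun (congrArg Placement.col he) i
      rw [hzi] at this
      omega
    exact ⟨z, Or.inl ⟨i, k, hsm⟩, hxz, hzy, hzne⟩

end Aux6
/-- `y` covers `x` in the rook poset if and only if `x` is obtained from `y`
by a single switch move or a single push move. -/
theorem rcovers_iff_move {n : ℕ} (lam : Partition n) (x y : Placement lam) :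
    rcovers x y ↔ ((∃ i k : Fin n, SwitchMove y x i k) ∨ ∃ i : Fin n, PushMove y x i) := by
  constructor
  · rintro ⟨hle, hne, hmin⟩
    obtain ⟨z, hmove, hxz, hzy, hzne⟩ := exists_move x y hle hne
    rcases hmin z hxz hzy with rfl | rfl
    · exact hmove
    · exact absurd rfl hzne
  · rintro (⟨i, k, hsm⟩ | ⟨i, hpm⟩)
    · refine ⟨?_, ?_, ?_⟩
      · apply rle_iff_cnt.2
        intro j v
        have := switch_cnt hsm j v
        omega
      · intro he
        obtain ⟨hik, hba, -, hxi, -, -⟩ := hsm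
        have := congrFun (congrArg Placement.col he) i
        omega
      · intro z hxz hzy
        exact switch_squeeze hsm (rle_iff_cnt.1 hxz) (rle_iff_cnt.1 hzy)
    · refine ⟨?_, ?_, ?_⟩
      · apply rle_iff_cnt.2
        intro j v
        have := push_cnt hpm j v
        omega
      · intro he
        obtain ⟨c, hc1, hc2, -, -, hxi, -⟩ := hpm
        have := congrFun (congrArg Placement.col he) i
        omega
      · intro z hxz hzy
        exact push_squeeze hpm (rle_iff_cnt.1 hxz) (rle_iff_cnt.1 hzy)

end RookPoset
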